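/- Let n ≥ 1 and let X = {0,1}^n be the set of binary words of length n with the ultrametric d(x,y) = 2^{-m} where m is the first coordinate at which x and y differ (and d(x,x) = 0). Then the center of distances of (X,d) equals {0} ∪ {2^{-1}, 2^{-2}, …, 2^{-n}}, and hence |C(X)| = 1 + n = 1 + log₂|X|. -/

import Mathlib

/-- The ultrametric on binary words of length `n`: `d(x,y) = 2^{-m}` where `m` is the
first place (counting from `1`) at which `x` and `y` differ, and `d(x,x) = 0`. -/
noncomputable def wordDist {n : ℕ} (x y : Fin n → Bool) : ℝ :=
  if h : x = y then 0
  else (2 : ℝ) ^ (-(((Finset.univ.filter fun i => x i ≠ y i).min'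
    (by simpa [Finset.filter_nonempty_iff, funext_iff] using h) : Fin n) + 1 : ℤ))

lemma wordDist_update {n : ℕ} (p : Fin n → Bool) (i : Fin n) :
    wordDist p (Function.update p i (!p i)) = (2 : ℝ) ^ (-(i : ℤ) - 1) := by
  have hne : p ≠ Function.update p i (!p i) := by
    intro h
    have := congrFun h i
    simp [Function.update_self] at this
  rw [wordDist, dif_neg hne]
  have hfil : (Finset.univ.filter fun j => p j ≠ Function.update p i (!p i) j) = {i} := by
    ext j
    by_cases hj : j = i <;> simp [hj, Function.update_apply]
  have hmin : (Finset.univ.filter fun j => p j ≠ Function.update p i (!p i) j).min'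
      (by simpa [Finset.filter_nonempty_iff, funext_iff] using hne) = i := by
    apply le_antisymm
    · apply Finset.min'_le
      rw [hfil]; simp
    · apply Finset.le_min'
      intro y hy
      rw [hfil] at hy
      simp at hy
      simp [hy]
  rw [hmin]
  ring_nf

theorem center_of_binary_words (n : ℕ) (hn : 1 ≤ n) :
    {t : ℝ | ∀ p : Fin n → Bool, ∃ x : Fin n → Bool, wordDist p x = t}
        = {0} ∪ (Set.range fun i : Fin n => (2 : ℝ) ^ (-(i : ℤ) - 1)) ∧
      ({t : ℝ | ∀ p : Fin n → Bool, ∃ x : Fin n → Bool, wordDist p x = t}).ncard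
        = 1 + n := by
  have hset : {t : ℝ | ∀ p : Fin n → Bool, ∃ x : Fin n → Bool, wordDist p x = t}
      = {0} ∪ (Set.range fun i : Fin n => (2 : ℝ) ^ (-(i : ℤ) - 1)) := by
    ext t
    constructor
    · intro ht
      obtain ⟨x, hx⟩ := ht (fun _ => false)
      by_cases h : (fun _ : Fin n => false) = x
      · left
        rw [← hx, wordDist, dif_pos h]; rfl
      · right
        rw [← hx, wordDist, dif_neg h]
        refine ⟨(Finset.univ.filter fun i => (fun _ : Fin n => false) i ≠ x i).min'
          (by simpa [Finset.filter_nonempty_iff, funext_iff] using h), ?_⟩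
        simp only []
        congr 1
        push_cast
        ring
    · rintro (ht | ⟨i, hi⟩)
      · intro p
        exact ⟨p, by simp [wordDist, ht.symm]⟩
      · intro p
        exact ⟨Function.update p i (!p i), by rw [wordDist_update]; exact hi⟩
  refine ⟨hset, ?_⟩
  rw [hset]
  have hinj : Function.Injective fun i : Fin n => (2 : ℝ) ^ (-(i : ℤ) - 1) := by
    intro a b hab
    have h2 : (1 : ℝ) < 2 := one_lt_two
    have := zpow_right_injective₀ (by norm_num : (0:ℝ) < 2) (by norm_num) hab
    have : (a : ℤ) = b := by omega
    exact Fin.ext (by exact_mod_cast this)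
  have h0 : (0 : ℝ) ∉ Set.range fun i : Fin n => (2 : ℝ) ^ (-(i : ℤ) - 1) := by
    rintro ⟨i, hi⟩
    exact absurd hi (by positivity)
  have hr : (Set.range fun i : Fin n => (2 : ℝ) ^ (-(i : ℤ) - 1)).ncard = n := by
    rw [← Set.image_univ, Set.ncard_image_of_injective _ hinj, Set.ncard_univ]
    simp
  rw [Set.singleton_union, Set.ncard_insert_of_notMem h0 (Set.finite_range _), hr]
  omega
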